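/- Let A be an (n+1)×(n+1) matrix with A² = I, A = Aᵗ, and A D₀ A = (−1)^n D₀ A D₀ where D₀ = diag((−1)^k). Let π be the diagonal rank-one projector at position m. Then π (AπA) D₀ = (−1)^m · (−1)^n A_{mm} · π (A D₀ A), i.e. π π̂ D₀ = ξη · π D̂₀ with ξ = (−1)^m, η = (−1)^n A_{mm}. -/

import Mathlib

open Matrix

/-- Analogue of relation (10) in Lemma 4: π π̂ D₀ = ξη π D̂₀ with
ξ = (−1)^m, η = (−1)ⁿ A_{mm}, D̂₀ = A D₀ A, π̂ = A π A. -/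
theorem stmt_13 (n : ℕ) (m : Fin (n + 1)) (A D₀ π : Matrix (Fin (n + 1)) (Fin (n + 1)) ℝ)
    (hA2 : A * A = 1) (hsym : A = Aᵀ)
    (hD₀ : D₀ = Matrix.diagonal fun k : Fin (n + 1) => (-1 : ℝ) ^ (k : ℕ))
    (hracah : A * D₀ * A = (-1 : ℝ) ^ n • (D₀ * A * D₀))
    (hπ : π = Matrix.single m m 1) :
    π * (A * π * A) * D₀ = ((-1 : ℝ) ^ (m : ℕ) * ((-1 : ℝ) ^ n * A m m)) • (π * (A * D₀ * A)) := by
  rw [hracah]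
  subst hπ hD₀
  ext i j
  simp only [mul_apply, Matrix.single, of_apply, diagonal_apply, Matrix.smul_apply, smul_eq_mul,
    ite_mul, mul_ite, one_mul, mul_one, zero_mul, mul_zero, Finset.sum_ite_eq,
    Finset.sum_ite_eq', Finset.mem_univ, if_true]
  by_cases hi : i = m <;> simp [hi, Ne.symm, ite_and, Finset.sum_ite_eq, Finset.sum_ite_eq', eq_comm] <;> ring_nf <;> simp [show ∀ k : ℕ, ((-1 : ℝ) ^ k) ^ 2 = 1 from fun k => by rw [← pow_mul, pow_mul', neg_one_sq, one_pow]]
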